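/- Failure of the positivity inequality for unbounded harmonic functions: in the trace monoid on the 5-cycle with uniform valuation f(u) = p₀^{|u|}, the unbounded nonnegative Möbius harmonic function λ(u) = (p₁/p₀)^{|u|} satisfies, at u = a₁ (whose last Cartier-Foata clique is c = {a₁}, with parallel letters a₃, a₄): λ(a₁) - f(a₃)λ(a₁·a₃) - f(a₄)λ(a₁·a₄) = (p₁/p₀)(1 - 2p₁) < 0. -/

import Mathlib

open scoped Classical

/-- A clique of the independence graph `(Σ, I)`. -/
def IsCliq {α : Type*} (I : α → α → Prop) (c : Finset α) : Prop :=
  ∀ a ∈ c, ∀ b ∈ c, a ≠ b → I a b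

/-- Cartier–Foata admissibility `c → c'`. -/
def CFadm {α : Type*} (I : α → α → Prop) (c c' : Finset α) : Prop :=
  ∀ b ∈ c', ∃ a ∈ c, ¬ I a b

/-- Parallelism of cliques `c ∥ c'`, i.e. `c × c' ⊆ I`. -/
def Par {α : Type*} (I : α → α → Prop) (c c' : Finset α) : Prop :=
  ∀ a ∈ c, ∀ b ∈ c', I a b

/-- The commutation relation `ab = ba` for `(a,b) ∈ I`, generating the trace
monoid congruence on the free monoid. -/
def traceRel {α : Type*} (I : α → α → Prop) : FreeMonoid α → FreeMonoid α → Prop :=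
  fun x y => ∃ a b, I a b ∧ x = FreeMonoid.of a * FreeMonoid.of b ∧
    y = FreeMonoid.of b * FreeMonoid.of a

/-- The trace monoid `M(Σ, I) = Σ* / R`. -/
abbrev TM {α : Type*} (I : α → α → Prop) := Con.Quotient (conGen (traceRel I))

/-- Canonical projection from the free monoid onto the trace monoid. -/
def mkTM {α : Type*} (I : α → α → Prop) : FreeMonoid α →* TM I := Con.mk' _

/-- The image of a letter in the trace monoid. -/
def emb {α : Type*} (I : α → α → Prop) (a : α) : TM I := mkTM I (FreeMonoid.of a)

/-- The trace associated to a clique (product of its letters in some enumeration). -/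
noncomputable def ctr {α : Type*} (I : α → α → Prop) (c : Finset α) : TM I :=
  mkTM I ((c.toList.map FreeMonoid.of).prod)

/-- The prefix (left divisibility) order on traces: `u ≤ v ↔ ∃ w, v = u·w`. -/
def pref {α : Type*} (I : α → α → Prop) (u v : TM I) : Prop := ∃ w, v = u * w

/-- The 5-cycle independence graph on `Fin 5`: the letter `0` is independent of
its neighbours `1` and `4`, and `{1, 4}` is not a clique. -/
def I5 : Fin 5 → Fin 5 → Prop := fun a b => a ≠ b ∧ (b = a + 1 ∨ a = b + 1)

/-- `p₀ = 1/2 - √5/10`. -/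
noncomputable def p0 : ℝ := 1 / 2 - Real.sqrt 5 / 10

/-- `p₁ = 1/2 + √5/10`. -/
noncomputable def p1 : ℝ := 1 / 2 + Real.sqrt 5 / 10

/-- Failure of the positivity inequality for the unbounded nonnegative Möbius
harmonic function `λ(u) = (p₁/p₀)^{|u|}` at `u = a₁` (here `a₁ = 0`, with
parallel letters `a₃ = 1` and `a₄ = 4`):
`λ(a₁) - f(a₃)λ(a₁a₃) - f(a₄)λ(a₁a₄) = (p₁/p₀)(1 - 2p₁) < 0`. -/
theorem positivity_failure_C5
    (len : TM I5 → ℕ) (hlen1 : ∀ a : Fin 5, len (emb I5 a) = 1)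
    (hlenm : ∀ u v : TM I5, len (u * v) = len u + len v) :
    (p1 / p0) ^ (len (emb I5 0))
      - p0 ^ (len (emb I5 1)) * (p1 / p0) ^ (len (emb I5 0 * emb I5 1))
      - p0 ^ (len (emb I5 4)) * (p1 / p0) ^ (len (emb I5 0 * emb I5 4))
      = (p1 / p0) * (1 - 2 * p1) ∧
    (p1 / p0) * (1 - 2 * p1) < 0 := by
  have hs5 : Real.sqrt 5 < 5 := by
    have : Real.sqrt 5 < Real.sqrt 25 := by
      apply Real.sqrt_lt_sqrt <;> norm_num
    simpa [show (25:ℝ) = 5^2 by norm_num, Real.sqrt_sq] using this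
  have hs0 : (0:ℝ) < Real.sqrt 5 := Real.sqrt_pos.mpr (by norm_num)
  have hs1 : (1:ℝ) < Real.sqrt 5 := by
    nlinarith [Real.sq_sqrt (show (0:ℝ) ≤ 5 by norm_num)]
  have hp0 : (0:ℝ) < p0 := by unfold p0; linarith
  have hp1 : (0:ℝ) < p1 := by unfold p1; linarith
  constructor
  · simp only [hlen1, hlenm]
    field_simp
    ring_nf
    field_simp
  · apply mul_neg_of_pos_of_neg
    · exact div_pos hp1 hp0
    · unfold p1; linarith
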